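/- Let A ∈ ℝ^{N×N} (N = 2M+1) be the symmetric pentadiagonal Toeplitz matrix with diagonal 2(k₁+k₂), first off-diagonals -k₁, second off-diagonals -k₂, with k₁ = 1, k₂ ∈ (-1/4, 0). Then the corner entries of the inverse satisfy (A^{-1})_{1,1} > 0 and (A^{-1})_{1,N} > 0. -/

import Mathlib

namespace Stmt8Aux

open Matrix
open scoped NNReal

variable {n : ℕ}

/-- The superdiagonal shift matrix. -/
def Em (n : ℕ) : Matrix (Fin n) (Fin n) ℝ :=
  Matrix.of fun i j => if (i : ℕ) + 1 = (j : ℕ) then 1 else 0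

lemma sum_up {M : Type*} [AddCommMonoid M] (i : Fin n) (f : Fin n → M) :
    (∑ j : Fin n, if (i : ℕ) + 1 = (j : ℕ) then f j else 0)
      = if h : (i : ℕ) + 1 < n then f ⟨(i : ℕ) + 1, h⟩ else 0 := by
  by_cases h : (i : ℕ) + 1 < n
  · rw [dif_pos h, Finset.sum_eq_single (⟨(i : ℕ) + 1, h⟩ : Fin n)]
    · simp
    · intro j _ hj
      exact if_neg fun hc => hj (Fin.ext hc.symm)
    · exact fun h' => absurd (Finset.mem_univ _) h'
  · rw [dif_neg h]
    exact Finset.sum_eq_zero fun j _ => if_neg fun hc => h (by omega)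

lemma sum_down {M : Type*} [AddCommMonoid M] (i : Fin n) (f : Fin n → M) :
    (∑ j : Fin n, if (j : ℕ) + 1 = (i : ℕ) then f j else 0)
      = if h : 1 ≤ (i : ℕ) then f ⟨(i : ℕ) - 1, by omega⟩ else 0 := by
  by_cases h : 1 ≤ (i : ℕ)
  · have hlt : (i : ℕ) - 1 < n := by have := i.isLt; omega
    rw [dif_pos h, Finset.sum_eq_single (⟨(i : ℕ) - 1, hlt⟩ : Fin n)]
    · rw [if_pos (by simp; omega)]
    · intro j _ hj
      exact if_neg fun hc => hj (Fin.ext (by simp; omega))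
    · exact fun h' => absurd (Finset.mem_univ _) h'
  · rw [dif_neg h]
    exact Finset.sum_eq_zero fun j _ => if_neg (by omega)

lemma Em_mul_apply (X : Matrix (Fin n) (Fin n) ℝ) (i j : Fin n) :
    (Em n * X) i j = if h : (i : ℕ) + 1 < n then X ⟨(i : ℕ) + 1, h⟩ j else 0 := by
  rw [mul_apply]
  rw [show (fun k => Em n i k * X k j)
      = fun k : Fin n => if (i : ℕ) + 1 = (k : ℕ) then X k j else 0 from ?_]
  · exact sum_up i fun k => X k j
  · funext k
    simp [Em, ite_mul]

lemma EmT_mul_apply (X : Matrix (Fin n) (Fin n) ℝ) (i j : Fin n) :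
    ((Em n)ᵀ * X) i j
      = if h : 1 ≤ (i : ℕ) then X ⟨(i : ℕ) - 1, by have := i.isLt; omega⟩ j else 0 := by
  rw [mul_apply]
  rw [show (fun k => (Em n)ᵀ i k * X k j)
      = fun k : Fin n => if (k : ℕ) + 1 = (i : ℕ) then X k j else 0 from ?_]
  · exact sum_down i fun k => X k j
  · funext k
    simp [Em, transpose_apply, ite_mul]

lemma Em_mulVec (x : Fin n → ℝ) (i : Fin n) :
    (Em n *ᵥ x) i = if h : (i : ℕ) + 1 < n then x ⟨(i : ℕ) + 1, h⟩ else 0 := by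
  rw [mulVec, dotProduct]
  rw [show (fun k => Em n i k * x k)
      = fun k : Fin n => if (i : ℕ) + 1 = (k : ℕ) then x k else 0 from ?_]
  · exact sum_up i x
  · funext k
    simp [Em, ite_mul]

lemma EmT_mulVec (x : Fin n → ℝ) (i : Fin n) :
    ((Em n)ᵀ *ᵥ x) i
      = if h : 1 ≤ (i : ℕ) then x ⟨(i : ℕ) - 1, by have := i.isLt; omega⟩ else 0 := by
  rw [mulVec, dotProduct]
  rw [show (fun k => (Em n)ᵀ i k * x k)
      = fun k : Fin n => if (k : ℕ) + 1 = (i : ℕ) then x k else 0 from ?_]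
  · exact sum_down i x
  · funext k
    simp [Em, transpose_apply, ite_mul]


-- entry lemmas for vecMulVec products
lemma vecMulVec_mul (u v : Fin n → ℝ) (X : Matrix (Fin n) (Fin n) ℝ) :
    vecMulVec u v * X = vecMulVec u (v ᵥ* X) := by
  ext i j
  simp only [mul_apply, vecMulVec_apply, vecMul, dotProduct, Finset.mul_sum]
  exact Finset.sum_congr rfl fun k _ => by ring

lemma mul_vecMulVec (u v : Fin n → ℝ) (X : Matrix (Fin n) (Fin n) ℝ) :
    X * vecMulVec u v = vecMulVec (X *ᵥ u) v := by
  ext i j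
  simp only [mul_apply, vecMulVec_apply, mulVec, dotProduct, Finset.sum_mul]
  exact Finset.sum_congr rfl fun k _ => by ring

lemma vecMulVec_mul_vecMulVec (u v a b : Fin n → ℝ) :
    vecMulVec u v * vecMulVec a b = (v ⬝ᵥ a) • vecMulVec u b := by
  ext i j
  simp only [mul_apply, vecMulVec_apply, Matrix.smul_apply, dotProduct, Finset.sum_mul, smul_eq_mul,
    Finset.mul_sum]
  exact Finset.sum_congr rfl fun k _ => by ring

lemma smul_vecMulVec (c : ℝ) (u v : Fin n → ℝ) :
    vecMulVec (c • u) v = c • vecMulVec u v := by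
  ext i j
  simp [vecMulVec_apply, mul_assoc]

/-- Sherman–Morrison: explicit right inverse of a rank-one update. -/
lemma sherman (Mm N : Matrix (Fin n) (Fin n) ℝ) (hMN : Mm * N = 1)
    (u v : Fin n → ℝ) (c : ℝ) (hc : c = 1 + v ⬝ᵥ (N *ᵥ u)) (hc0 : c ≠ 0) :
    (Mm + vecMulVec u v) * (N - c⁻¹ • vecMulVec (N *ᵥ u) (v ᵥ* N)) = 1 := by
  have h1 : Mm * (c⁻¹ • vecMulVec (N *ᵥ u) (v ᵥ* N))
      = c⁻¹ • vecMulVec u (v ᵥ* N) := by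
    rw [mul_smul_comm, mul_vecMulVec, mulVec_mulVec, hMN, one_mulVec]
  have h2 : vecMulVec u v * N = vecMulVec u (v ᵥ* N) := vecMulVec_mul u v N
  have h3 : vecMulVec u v * (c⁻¹ • vecMulVec (N *ᵥ u) (v ᵥ* N))
      = (c⁻¹ * (c - 1)) • vecMulVec u (v ᵥ* N) := by
    rw [mul_smul_comm, vecMulVec_mul_vecMulVec, smul_smul]
    congr 1
    rw [hc]; ring
  rw [add_mul, mul_sub, mul_sub, hMN, h1, h2, h3]
  have : (c⁻¹ * (c - 1)) = 1 - c⁻¹ := by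
    field_simp
  rw [this]
  module


lemma E2_apply (i j : Fin n) :
    (Em n * Em n) i j = if (i : ℕ) + 2 = (j : ℕ) then 1 else 0 := by
  rw [Em_mul_apply]
  by_cases h : (i : ℕ) + 1 < n
  · rw [dif_pos h]
    simp only [Em, of_apply]
    try split_ifs <;> first | rfl | omega
  · rw [dif_neg h, if_neg (by omega)]

lemma EEt (il : Fin n) (hil : (il : ℕ) = n - 1) :
    Em n * (Em n)ᵀ = 1 - vecMulVec (Pi.single il 1) (Pi.single il 1) := by
  ext i j
  rw [Em_mul_apply]
  simp only [transpose_apply, Em, of_apply, Matrix.sub_apply, one_apply, vecMulVec_apply,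
    Pi.single_apply, Fin.ext_iff]
  have hi := i.isLt
  have hj := j.isLt
  split_ifs <;> first | (exfalso; omega) | norm_num

lemma EtE (i0 : Fin n) (hi0 : (i0 : ℕ) = 0) :
    (Em n)ᵀ * Em n = 1 - vecMulVec (Pi.single i0 1) (Pi.single i0 1) := by
  ext i j
  rw [mul_apply]
  rw [show (fun k : Fin n => (Em n)ᵀ i k * Em n k j)
      = fun k : Fin n => if (k : ℕ) + 1 = (i : ℕ) ∧ (k : ℕ) + 1 = (j : ℕ) then 1 else 0 from ?_]
  · simp only [Matrix.sub_apply, one_apply, vecMulVec_apply, Pi.single_apply, Fin.ext_iff]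
    by_cases hij : (i : ℕ) = (j : ℕ)
    · by_cases h0 : (i : ℕ) = 0
      · rw [Finset.sum_eq_zero (fun k _ => if_neg (by omega))]
        split_ifs <;> first | (exfalso; omega) | norm_num
      · have hlt : (i : ℕ) - 1 < n := by have := i.isLt; omega
        rw [Finset.sum_eq_single (⟨(i : ℕ) - 1, hlt⟩ : Fin n)]
        · rw [if_pos (by constructor <;> (simp; omega))]
          split_ifs <;> first | (exfalso; omega) | norm_num
        · intro k _ hk
          refine if_neg fun hc => hk (Fin.ext ?_)
          simp
          omega
        · exact fun h' => absurd (Finset.mem_univ _) h'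
    · rw [Finset.sum_eq_zero (fun k _ => if_neg (by omega))]
      split_ifs <;> first | (exfalso; omega) | norm_num
  · funext k
    simp only [transpose_apply, Em, of_apply, ite_mul, one_mul, zero_mul]
    split_ifs <;> first | rfl | (exfalso; omega)

lemma A_entrywise (k₂ : ℝ) (A : Matrix (Fin n) (Fin n) ℝ)
    (hA : ∀ i j : Fin n, A i j =
      if (i : ℤ) = (j : ℤ) then 2 * (1 + k₂)
      else if |(i : ℤ) - (j : ℤ)| = 1 then -1
      else if |(i : ℤ) - (j : ℤ)| = 2 then -k₂
      else 0) :
    A = (2 + 2 * k₂) • (1 : Matrix (Fin n) (Fin n) ℝ) - Em n - (Em n)ᵀ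
        - k₂ • (Em n * Em n) - k₂ • (Em n * Em n)ᵀ := by
  ext i j
  rw [hA i j]
  have c1 : ((i : ℤ) = (j : ℤ)) ↔ ((i : ℕ) = (j : ℕ)) := by
    constructor <;> intro h <;> [exact_mod_cast h; exact_mod_cast h]
  have c2 : (|(i : ℤ) - (j : ℤ)| = 1) ↔ ((i : ℕ) + 1 = (j : ℕ) ∨ (j : ℕ) + 1 = (i : ℕ)) := by
    rw [abs_eq (by norm_num : (0:ℤ) ≤ 1)]
    omega
  have c3 : (|(i : ℤ) - (j : ℤ)| = 2) ↔ ((i : ℕ) + 2 = (j : ℕ) ∨ (j : ℕ) + 2 = (i : ℕ)) := by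
    rw [abs_eq (by norm_num : (0:ℤ) ≤ 2)]
    omega
  simp only [Matrix.sub_apply, Matrix.smul_apply, one_apply, transpose_apply, smul_eq_mul]
  rw [E2_apply i j, E2_apply j i]
  simp only [c1, c2, c3, Em, of_apply, Fin.ext_iff]
  split_ifs <;> first | (exfalso; omega) | ring


noncomputable def Pm (n : ℕ) : Matrix (Fin n) (Fin n) ℝ := (2 : ℝ) • 1 - Em n - (Em n)ᵀ

noncomputable def Qm (n : ℕ) (k₂ : ℝ) : Matrix (Fin n) (Fin n) ℝ :=
  (1 + 2 * k₂) • 1 + k₂ • Em n + k₂ • (Em n)ᵀ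

lemma Q_eq (k₂ : ℝ) : Qm n k₂ = (1 + 4 * k₂) • (1 : Matrix (Fin n) (Fin n) ℝ) - k₂ • Pm n := by
  unfold Qm Pm
  module

lemma D_eq (k₂ : ℝ) : Pm n * Qm n k₂ = (1 + 4 * k₂) • Pm n - k₂ • (Pm n * Pm n) := by
  rw [Q_eq]
  simp only [mul_sub, mul_smul_comm, mul_one]

lemma QP_eq (k₂ : ℝ) : Qm n k₂ * Pm n = Pm n * Qm n k₂ := by
  rw [Q_eq]
  simp only [mul_sub, sub_mul, mul_smul_comm, smul_mul_assoc, mul_one, one_mul]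

lemma PQ_eq (k₂ : ℝ) (i0 il : Fin n) (hi0 : (i0 : ℕ) = 0) (hil : (il : ℕ) = n - 1) :
    Pm n * Qm n k₂
      = ((2 + 2 * k₂) • 1 - Em n - (Em n)ᵀ - k₂ • (Em n * Em n) - k₂ • (Em n * Em n)ᵀ)
        + k₂ • vecMulVec (Pi.single i0 1) (Pi.single i0 1)
        + k₂ • vecMulVec (Pi.single il 1) (Pi.single il 1) := by
  have h1 := EEt il hil
  have h2 := EtE i0 hi0
  have h3 : (Em n)ᵀ * (Em n)ᵀ = (Em n * Em n)ᵀ := (transpose_mul _ _).symm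
  unfold Pm Qm
  simp only [mul_add, add_mul, sub_mul, mul_sub, smul_mul_assoc, mul_smul_comm, one_mul, mul_one]
  rw [h1, h2, h3]
  module

lemma Pm_transpose : (Pm n)ᵀ = Pm n := by
  unfold Pm
  simp only [transpose_sub, transpose_smul, transpose_one, transpose_transpose]
  abel

lemma Pm_fact (il : Fin n) (hil : (il : ℕ) = n - 1) :
    Pm n = (1 - Em n) * (1 - Em n)ᵀ + vecMulVec (Pi.single il 1) (Pi.single il 1) := by
  have h1 := EEt il hil
  have : (1 - Em n) * (1 - Em n)ᵀ = 1 - (Em n)ᵀ - Em n + Em n * (Em n)ᵀ := by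
    rw [transpose_sub, transpose_one]
    simp only [mul_sub, sub_mul, one_mul, mul_one]
    abel
  rw [this, h1]
  unfold Pm
  module

lemma vecMulVec_mulVec (u v x : Fin n → ℝ) :
    vecMulVec u v *ᵥ x = (v ⬝ᵥ x) • u := by
  ext i
  simp only [mulVec, dotProduct, vecMulVec_apply, Pi.smul_apply, smul_eq_mul, Finset.sum_mul,
    Finset.mul_sum]
  exact Finset.sum_congr rfl fun k _ => by ring

lemma dot_self_pos {y : Fin n → ℝ} (hy : y ≠ 0) : 0 < y ⬝ᵥ y := by
  obtain ⟨i, hi⟩ := Function.ne_iff.mp hy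
  refine Finset.sum_pos' (fun k _ => mul_self_nonneg _) ⟨i, Finset.mem_univ i, ?_⟩
  exact mul_self_pos.mpr hi

lemma oneSubEmT_inj (x : Fin n → ℝ) (hx : (1 - (Em n)ᵀ) *ᵥ x = 0) : x = 0 := by
  have hx' : ∀ i : Fin n, x i = ((Em n)ᵀ *ᵥ x) i := by
    intro i
    have := congrFun hx i
    rw [sub_mulVec, one_mulVec] at this
    have h2 : x i - ((Em n)ᵀ *ᵥ x) i = 0 := this
    linarith
  have key : ∀ m : ℕ, ∀ h : m < n, x ⟨m, h⟩ = 0 := by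
    intro m
    induction m with
    | zero =>
      intro h
      rw [hx' ⟨0, h⟩, EmT_mulVec]
      simp
    | succ k ih =>
      intro h
      rw [hx' ⟨k + 1, h⟩, EmT_mulVec]
      rw [dif_pos (by simp)]
      have hk : k < n := by omega
      have : x ⟨(↑(⟨k + 1, h⟩ : Fin n)) - 1, by omega⟩ = x ⟨k, hk⟩ := by
        congr 1
      rw [this]
      exact ih hk
  funext i
  have := key i.val i.isLt
  simpa using this

lemma posDef_Pm (il : Fin n) (hil : (il : ℕ) = n - 1) : (Pm n).PosDef := by
  rw [posDef_iff_dotProduct_mulVec]; constructor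
  · rw [IsHermitian, conjTranspose_eq_transpose_of_trivial, Pm_transpose]
  · intro x hx
    rw [star_trivial, Pm_fact il hil, add_mulVec, dotProduct_add]
    have term1 : x ⬝ᵥ ((1 - Em n) * (1 - Em n)ᵀ) *ᵥ x
        = ((1 - Em n)ᵀ *ᵥ x) ⬝ᵥ ((1 - Em n)ᵀ *ᵥ x) := by
      rw [← mulVec_mulVec, dotProduct_mulVec, ← mulVec_transpose]
    have term2 : x ⬝ᵥ (vecMulVec (Pi.single il 1) (Pi.single il 1)) *ᵥ x
        = x il * x il := by
      rw [vecMulVec_mulVec, dotProduct_smul, single_dotProduct, dotProduct_single]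
      simp only [smul_eq_mul, one_mul, mul_one]
    rw [term1, term2]
    have hy : (1 - Em n)ᵀ *ᵥ x ≠ 0 := by
      intro h0
      apply hx
      apply oneSubEmT_inj
      rwa [transpose_sub, transpose_one] at h0
    have := dot_self_pos hy
    nlinarith [mul_self_nonneg (x il)]

lemma posDef_D (k₂ : ℝ) (hk : k₂ < 0) (h4 : -1/4 < k₂) (il : Fin n) (hil : (il : ℕ) = n - 1) :
    (Pm n * Qm n k₂).PosDef := by
  have hP := posDef_Pm il hil
  rw [posDef_iff_dotProduct_mulVec]; constructor
  · rw [IsHermitian, conjTranspose_eq_transpose_of_trivial, D_eq, transpose_sub, transpose_smul,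
      transpose_smul, transpose_mul, Pm_transpose]
  · intro x hx
    rw [star_trivial, D_eq, sub_mulVec, dotProduct_sub, smul_mulVec, smul_mulVec,
      dotProduct_smul, dotProduct_smul]
    have hq : 0 < x ⬝ᵥ Pm n *ᵥ x := by
      have := hP.dotProduct_mulVec_pos hx
      rwa [star_trivial] at this
    have hsq : 0 ≤ x ⬝ᵥ (Pm n * Pm n) *ᵥ x := by
      have : x ⬝ᵥ (Pm n * Pm n) *ᵥ x = (Pm n *ᵥ x) ⬝ᵥ (Pm n *ᵥ x) := by
        rw [← mulVec_mulVec, dotProduct_mulVec, ← mulVec_transpose, Pm_transpose]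
      rw [this]
      exact Finset.sum_nonneg fun k _ => mul_self_nonneg _
    simp only [smul_eq_mul]
    nlinarith


section Neumann

attribute [local instance] Matrix.linftyOpSemiNormedRing Matrix.linftyOpNormedRing
  Matrix.linftyOpNormedAlgebra

lemma norm_Sm_le : ‖Em n + (Em n)ᵀ‖ ≤ 2 := by
  have h : ‖Em n + (Em n)ᵀ‖₊ ≤ 2 := by
    rw [Matrix.linfty_opNNNorm_def]
    apply Finset.sup_le
    intro i _
    calc ∑ j, ‖(Em n + (Em n)ᵀ) i j‖₊
        ≤ ∑ j, (‖Em n i j‖₊ + ‖(Em n)ᵀ i j‖₊) :=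
          Finset.sum_le_sum fun j _ => nnnorm_add_le _ _
      _ = (∑ j, ‖Em n i j‖₊) + ∑ j, ‖(Em n)ᵀ i j‖₊ := Finset.sum_add_distrib
      _ ≤ 1 + 1 := by
          gcongr
          · have : ∀ j : Fin n, ‖Em n i j‖₊
                = if (i : ℕ) + 1 = (j : ℕ) then (1 : ℝ≥0) else 0 := by
              intro j
              simp only [Em, of_apply]
              split_ifs <;> simp
            simp_rw [this]
            rw [sum_up i (fun _ => (1 : ℝ≥0))]
            split_ifs <;> simp
          · have : ∀ j : Fin n, ‖(Em n)ᵀ i j‖₊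
                = if (j : ℕ) + 1 = (i : ℕ) then (1 : ℝ≥0) else 0 := by
              intro j
              simp only [Em, transpose_apply, of_apply]
              split_ifs <;> simp
            simp_rw [this]
            rw [sum_down i (fun _ => (1 : ℝ≥0))]
            split_ifs <;> simp
      _ = 2 := by norm_num
  calc ‖Em n + (Em n)ᵀ‖ = ((‖Em n + (Em n)ᵀ‖₊ : ℝ≥0) : ℝ) := (coe_nnnorm _).symm
    _ ≤ ((2 : ℝ≥0) : ℝ) := by exact_mod_cast h
    _ = 2 := by norm_num

lemma Qinv_nonneg (k₂ : ℝ) (hk : k₂ < 0) (h4 : -1/4 < k₂) :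
    (∀ i j : Fin n, 0 ≤ (Qm n k₂)⁻¹ i j) ∧
      (∀ i : Fin n, (1 + 2 * k₂)⁻¹ ≤ (Qm n k₂)⁻¹ i i) := by
  set c : ℝ := 1 + 2 * k₂ with hcdef
  have hc : 0 < c := by rw [hcdef]; linarith
  set r : ℝ := -k₂ / c with hrdef
  have hr0 : 0 < r := by
    apply div_pos <;> linarith
  have hr2 : 2 * r < 1 := by
    have h1 : -k₂ / c < 1 / 2 := by
      rw [div_lt_div_iff₀ hc (by norm_num)]
      linarith
    rw [hrdef]
    linarith
  set Z : Matrix (Fin n) (Fin n) ℝ := r • (Em n + (Em n)ᵀ) with hZdef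
  have hcr : c * r = -k₂ := by
    rw [hrdef]
    field_simp
  have hQZ : Qm n k₂ = c • ((1 : Matrix (Fin n) (Fin n) ℝ) - Z) := by
    rw [hZdef, smul_sub, smul_smul, hcr]
    unfold Qm
    module
  have hnorm : ‖Z‖ < 1 := by
    rw [hZdef, norm_smul, Real.norm_of_nonneg hr0.le]
    have h2 := norm_Sm_le (n := n)
    nlinarith [norm_nonneg (Em n + (Em n)ᵀ)]
  have hsum : Summable (fun k : ℕ => Z ^ k) := summable_geometric_of_norm_lt_one hnorm
  have hNmul : (1 - Z) * (∑' k : ℕ, Z ^ k) = 1 := mul_neg_geom_series Z hnorm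
  have hQN : Qm n k₂ * (c⁻¹ • ∑' k : ℕ, Z ^ k) = 1 := by
    rw [hQZ, smul_mul_assoc, mul_smul_comm, smul_smul, mul_inv_cancel₀ hc.ne', hNmul, one_smul]
  have hQinv : (Qm n k₂)⁻¹ = c⁻¹ • ∑' k : ℕ, Z ^ k := Matrix.inv_eq_right_inv hQN
  have hZ0 : ∀ i j : Fin n, 0 ≤ Z i j := by
    intro i j
    rw [hZdef]
    simp only [Matrix.smul_apply, Matrix.add_apply, transpose_apply, Em, of_apply, smul_eq_mul]
    apply mul_nonneg hr0.le
    apply add_nonneg <;> split_ifs <;> norm_num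
  have hZpow : ∀ (k : ℕ) (i j : Fin n), 0 ≤ (Z ^ k) i j := by
    intro k
    induction k with
    | zero =>
      intro i j
      rw [pow_zero, one_apply]
      split_ifs <;> norm_num
    | succ m ih =>
      intro i j
      rw [pow_succ, mul_apply]
      exact Finset.sum_nonneg fun k _ => mul_nonneg (ih _ _) (hZ0 _ _)
  have hEval : ∀ i j : Fin n, (∑' k : ℕ, Z ^ k) i j = ∑' k : ℕ, (Z ^ k) i j := by
    intro i j
    have := ((Matrix.entryLinearMap ℝ ℝ i j).toContinuousLinearMap).map_tsum hsum
    simpa using this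
  have hsum_entry : ∀ i j : Fin n, Summable fun k : ℕ => (Z ^ k) i j := by
    intro i j
    have := hsum.map ((Matrix.entryLinearMap ℝ ℝ i j).toContinuousLinearMap)
      ((Matrix.entryLinearMap ℝ ℝ i j).toContinuousLinearMap).continuous
    simpa [Function.comp_def] using this
  constructor
  · intro i j
    rw [hQinv, Matrix.smul_apply, smul_eq_mul]
    apply mul_nonneg (by positivity)
    rw [hEval]
    exact tsum_nonneg fun k => hZpow k i j
  · intro i
    rw [hQinv, Matrix.smul_apply, smul_eq_mul]
    have h1 : (1 : ℝ) ≤ (∑' k : ℕ, Z ^ k) i i := by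
      rw [hEval]
      have h2 := Summable.le_tsum (hsum_entry i i) 0 (fun k _ => hZpow k i i)
      simpa using h2
    calc c⁻¹ = c⁻¹ * 1 := by ring
      _ ≤ c⁻¹ * (∑' k : ℕ, Z ^ k) i i := by
          apply mul_le_mul_of_nonneg_left h1 (by positivity)

end Neumann

lemma Pm_mulVec (x : Fin n → ℝ) (i : Fin n) :
    (Pm n *ᵥ x) i = 2 * x i
      - (if h : (i : ℕ) + 1 < n then x ⟨(i : ℕ) + 1, h⟩ else 0)
      - (if h : 1 ≤ (i : ℕ) then x ⟨(i : ℕ) - 1, by have := i.isLt; omega⟩ else 0) := by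
  unfold Pm
  rw [sub_mulVec, sub_mulVec, smul_mulVec, one_mulVec]
  simp only [Pi.sub_apply, Pi.smul_apply, smul_eq_mul]
  rw [Em_mulVec, EmT_mulVec]

lemma Pm_col_last (hn : 3 ≤ n) (il : Fin n) (hil : (il : ℕ) = n - 1) :
    Pm n *ᵥ (fun k : Fin n => ((k : ℕ) + 1 : ℝ)) = ((n : ℝ) + 1) • (Pi.single il 1 : Fin n → ℝ) := by
  funext i
  rw [Pm_mulVec]
  simp only [Pi.smul_apply, Pi.single_apply, smul_eq_mul]
  by_cases h1 : (i : ℕ) + 1 < n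
  · rw [dif_pos h1, if_neg (fun hc : i = il => by rw [hc, hil] at h1; omega)]
    by_cases h0 : 1 ≤ (i : ℕ)
    · rw [dif_pos h0]
      have hcast : (((i : ℕ) - 1 : ℕ) : ℝ) = ((i : ℕ) : ℝ) - 1 := by
        push_cast [h0]
        ring
      simp only [hcast]
      push_cast
      ring
    · have hi0 : (i : ℕ) = 0 := by omega
      rw [dif_neg h0]
      simp [hi0]
      norm_num
  · have hival : (i : ℕ) = n - 1 := by have := i.isLt; omega
    have h0 : 1 ≤ (i : ℕ) := by omega
    rw [dif_neg h1, dif_pos h0, if_pos (Fin.ext (by omega))]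
    have hcast : (((i : ℕ) - 1 : ℕ) : ℝ) = ((i : ℕ) : ℝ) - 1 := by
      push_cast [h0]
      ring
    simp only [hcast]
    have hcast2 : ((i : ℕ) : ℝ) = (n : ℝ) - 1 := by
      rw [hival]
      push_cast [show 1 ≤ n by omega]
      ring
    rw [hcast2]
    push_cast
    ring

lemma Pm_col_first (hn : 3 ≤ n) (i0 : Fin n) (hi0 : (i0 : ℕ) = 0) :
    Pm n *ᵥ (fun k : Fin n => ((n : ℝ) - (k : ℕ))) = ((n : ℝ) + 1) • (Pi.single i0 1 : Fin n → ℝ) := by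
  funext i
  rw [Pm_mulVec]
  simp only [Pi.smul_apply, Pi.single_apply, smul_eq_mul]
  by_cases h0 : 1 ≤ (i : ℕ)
  · rw [dif_pos h0, if_neg (fun hc : i = i0 => by rw [hc, hi0] at h0; omega)]
    have hcast : (((i : ℕ) - 1 : ℕ) : ℝ) = ((i : ℕ) : ℝ) - 1 := by
      push_cast [h0]
      ring
    by_cases h1 : (i : ℕ) + 1 < n
    · rw [dif_pos h1]
      simp only [hcast]
      push_cast
      ring
    · rw [dif_neg h1]
      simp only [hcast]
      have hival : ((i : ℕ) : ℝ) = (n : ℝ) - 1 := by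
        have : (i : ℕ) = n - 1 := by have := i.isLt; omega
        rw [this]
        push_cast [show 1 ≤ n by omega]
        ring
      rw [hival]
      ring
  · have hi : (i : ℕ) = 0 := by omega
    have h1 : (i : ℕ) + 1 < n := by omega
    rw [dif_neg h0, dif_pos h1, if_pos (Fin.ext (by omega))]
    simp only [hi]
    push_cast
    ring

set_option maxHeartbeats 1000000 in
theorem key (hn : 3 ≤ n) (k₂ : ℝ) (hk₂l : -1/4 < k₂) (hk₂u : k₂ < 0)
    (A : Matrix (Fin n) (Fin n) ℝ)
    (hA : ∀ i j : Fin n, A i j =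
      if (i : ℤ) = (j : ℤ) then 2 * (1 + k₂)
      else if |(i : ℤ) - (j : ℤ)| = 1 then -1
      else if |(i : ℤ) - (j : ℤ)| = 2 then -k₂
      else 0)
    (i0 il : Fin n) (hi0 : (i0 : ℕ) = 0) (hil : (il : ℕ) = n - 1) :
    0 < A⁻¹ i0 i0 ∧ 0 < A⁻¹ i0 il := by
  have hi0il : i0 ≠ il := by
    intro h
    rw [h] at hi0
    omega
  set t : ℝ := -k₂ with htdef
  have ht : 0 < t := by rw [htdef]; linarith
  set D : Matrix (Fin n) (Fin n) ℝ := Pm n * Qm n k₂ with hDdef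
  have hDpd : D.PosDef := posDef_D k₂ hk₂u hk₂l il hil
  have hDdet : IsUnit D.det := isUnit_iff_ne_zero.2 hDpd.det_pos.ne'
  set W : Matrix (Fin n) (Fin n) ℝ := D⁻¹ with hWdef
  have hDW : D * W = 1 := Matrix.mul_nonsing_inv _ hDdet
  have hDT : Dᵀ = D := by
    rw [← Matrix.conjTranspose_eq_transpose_of_trivial]
    exact hDpd.1
  have hWsym : ∀ a b : Fin n, W a b = W b a := by
    intro a b
    have h : Wᵀ = W := by rw [hWdef, Matrix.transpose_nonsing_inv, hDT]
    simpa [Matrix.transpose_apply] using congrFun (congrFun h b) a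
  have hWpd : W.PosDef := hDpd.inv
  -- P⁻¹ columns
  have hPpd := posDef_Pm il hil
  have hPdet : IsUnit (Pm n).det := isUnit_iff_ne_zero.2 hPpd.det_pos.ne'
  have hPinv_mul : (Pm n)⁻¹ * Pm n = 1 := Matrix.nonsing_inv_mul _ hPdet
  have hnpos : (0 : ℝ) < (n : ℝ) + 1 := by positivity
  have hPcol_l : ∀ k : Fin n, (Pm n)⁻¹ k il = (((k : ℕ) : ℝ) + 1) / ((n : ℝ) + 1) := by
    have h1 := congrArg (fun y => (Pm n)⁻¹ *ᵥ y) (Pm_col_last hn il hil)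
    simp only [Matrix.mulVec_mulVec] at h1
    rw [hPinv_mul, Matrix.one_mulVec, Matrix.mulVec_smul, Matrix.mulVec_single_one] at h1
    intro k
    have h2 := congrFun h1 k
    simp only [Pi.smul_apply, smul_eq_mul, mul_one, Matrix.col_apply] at h2
    rw [eq_div_iff hnpos.ne']
    linarith [h2]
  have hPcol_0 : ∀ k : Fin n, (Pm n)⁻¹ k i0 = ((n : ℝ) - ((k : ℕ) : ℝ)) / ((n : ℝ) + 1) := by
    have h1 := congrArg (fun y => (Pm n)⁻¹ *ᵥ y) (Pm_col_first hn i0 hi0)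
    simp only [Matrix.mulVec_mulVec] at h1
    rw [hPinv_mul, Matrix.one_mulVec, Matrix.mulVec_smul, Matrix.mulVec_single_one] at h1
    intro k
    have h2 := congrFun h1 k
    simp only [Pi.smul_apply, smul_eq_mul, mul_one, Matrix.col_apply] at h2
    rw [eq_div_iff hnpos.ne']
    linarith [h2]
  have hPcol_l_pos : ∀ k : Fin n, 0 < (Pm n)⁻¹ k il := by
    intro k
    rw [hPcol_l]
    positivity
  have hPcol_0_pos : ∀ k : Fin n, 0 < (Pm n)⁻¹ k i0 := by
    intro k
    rw [hPcol_0]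
    have hk : ((k : ℕ) : ℝ) < (n : ℝ) := by exact_mod_cast k.isLt
    apply div_pos (by linarith) hnpos
  obtain ⟨hQnn, hQdiag⟩ := Qinv_nonneg (n := n) k₂ hk₂u hk₂l
  have hcQ : (0 : ℝ) < (1 + 2 * k₂)⁻¹ := by
    have : (0:ℝ) < 1 + 2 * k₂ := by linarith
    positivity
  have hW_eq : W = (Qm n k₂)⁻¹ * (Pm n)⁻¹ := by rw [hWdef, hDdef, Matrix.mul_inv_rev]
  set α : ℝ := W i0 i0 with hαdef
  set β : ℝ := W i0 il with hβdef
  set α' : ℝ := W il il with hα'def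
  have hβ : 0 < β := by
    rw [hβdef, hW_eq, Matrix.mul_apply]
    have hterm : ∀ k : Fin n, 0 ≤ (Qm n k₂)⁻¹ i0 k * (Pm n)⁻¹ k il :=
      fun k => mul_nonneg (hQnn _ _) (hPcol_l_pos k).le
    have hlow := Finset.single_le_sum (f := fun k => (Qm n k₂)⁻¹ i0 k * (Pm n)⁻¹ k il)
      (fun k _ => hterm k) (Finset.mem_univ i0)
    have hpos : 0 < (Qm n k₂)⁻¹ i0 i0 * (Pm n)⁻¹ i0 il :=
      mul_pos (lt_of_lt_of_le hcQ (hQdiag i0)) (hPcol_l_pos i0)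
    linarith
  have hα : 0 < α := by
    rw [hαdef, hW_eq, Matrix.mul_apply]
    have hterm : ∀ k : Fin n, 0 ≤ (Qm n k₂)⁻¹ i0 k * (Pm n)⁻¹ k i0 :=
      fun k => mul_nonneg (hQnn _ _) (hPcol_0_pos k).le
    have hlow := Finset.single_le_sum (f := fun k => (Qm n k₂)⁻¹ i0 k * (Pm n)⁻¹ k i0)
      (fun k _ => hterm k) (Finset.mem_univ i0)
    have hpos : 0 < (Qm n k₂)⁻¹ i0 i0 * (Pm n)⁻¹ i0 i0 :=
      mul_pos (lt_of_lt_of_le hcQ (hQdiag i0)) (hPcol_0_pos i0)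
    linarith
  have hα' : 0 ≤ α' := by
    rw [hα'def, hW_eq, Matrix.mul_apply]
    exact Finset.sum_nonneg fun k _ => mul_nonneg (hQnn _ _) (hPcol_l_pos k).le
  -- Cauchy–Schwarz via positive definiteness
  have hCS : β ^ 2 < α * α' := by
    set x : Fin n → ℝ := Pi.single i0 β + Pi.single il (-α) with hxdef
    have hx0 : x i0 = β := by
      rw [hxdef]
      simp [Pi.single_apply, hi0il, (Ne.symm hi0il)]
    have hxne : x ≠ 0 := by
      intro h
      have := congrFun h i0
      rw [hx0] at this
      simp at this
      exact hβ.ne' this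
    have hq := hWpd.dotProduct_mulVec_pos hxne
    rw [star_trivial] at hq
    rw [hxdef, Matrix.mulVec_add, Matrix.mulVec_single, Matrix.mulVec_single,
      add_dotProduct, single_dotProduct, single_dotProduct] at hq
    simp only [Pi.add_apply, Pi.smul_apply, col_apply, op_smul_eq_mul] at hq
    have hsymm : W il i0 = β := by rw [hβdef]; exact hWsym il i0
    rw [hsymm] at hq
    -- hq : 0 < β * (W i0 i0 * β + W i0 il * -α) + -α * (β * β + W il il * -α)
    have hfac : 0 < α * (α * α' - β ^ 2) := by nlinarith [hq]
    nlinarith [hfac, hα]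
  -- Sherman–Morrison updates
  have hWu0 : W *ᵥ (t • (Pi.single i0 1 : Fin n → ℝ)) = fun k => t * W k i0 := by
    rw [Matrix.mulVec_smul, Matrix.mulVec_single_one]
    funext k
    simp
  have hvW0 : (Pi.single i0 (1:ℝ)) ᵥ* W = fun j => W i0 j := by
    rw [Matrix.single_vecMul]
    funext j
    simp
  have hc1eq : (1 : ℝ) + (Pi.single i0 (1:ℝ)) ⬝ᵥ (W *ᵥ (t • (Pi.single i0 1 : Fin n → ℝ)))
      = 1 + t * α := by
    rw [hWu0, single_dotProduct, one_mul, hαdef]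
  set c1 : ℝ := 1 + t * α with hc1def
  have hc1pos : 0 < c1 := by rw [hc1def]; nlinarith
  set N1 : Matrix (Fin n) (Fin n) ℝ :=
    W - c1⁻¹ • vecMulVec (W *ᵥ (t • (Pi.single i0 1 : Fin n → ℝ)))
      ((Pi.single i0 1 : Fin n → ℝ) ᵥ* W) with hN1def
  have hD1N1 : (D + vecMulVec (t • (Pi.single i0 1 : Fin n → ℝ)) (Pi.single i0 1)) * N1 = 1 := by
    rw [hN1def]
    exact sherman D W hDW _ _ c1 (hc1def.trans hc1eq.symm) hc1pos.ne'
  have hN1app : ∀ a b : Fin n, N1 a b = W a b - c1⁻¹ * (t * W a i0 * W i0 b) := by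
    intro a b
    rw [hN1def]
    simp only [Matrix.sub_apply, Matrix.smul_apply, smul_eq_mul]
    rw [hWu0, hvW0]
    simp only [vecMulVec_apply]
    try ring
  have hN1_00 : N1 i0 i0 = α / c1 := by
    rw [hN1app, hc1def, ← hαdef]
    field_simp
    ring
  have hN1_0l : N1 i0 il = β / c1 := by
    rw [hN1app, hc1def, ← hαdef, ← hβdef]
    field_simp
    ring
  have hN1_l0 : N1 il i0 = β / c1 := by
    rw [hN1app, hc1def, hWsym il i0, ← hαdef, ← hβdef]
    field_simp
    ring
  have hN1_ll : N1 il il = α' - c1⁻¹ * (t * β * β) := by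
    rw [hN1app, hWsym il i0]
  -- second update
  have hN1u : N1 *ᵥ (t • (Pi.single il 1 : Fin n → ℝ)) = fun k => t * N1 k il := by
    rw [Matrix.mulVec_smul, Matrix.mulVec_single_one]
    funext k
    simp
  have hvN1 : (Pi.single il (1:ℝ)) ᵥ* N1 = fun j => N1 il j := by
    rw [Matrix.single_vecMul]
    funext j
    simp
  have hc2eq : (1 : ℝ) + (Pi.single il (1:ℝ)) ⬝ᵥ (N1 *ᵥ (t • (Pi.single il 1 : Fin n → ℝ)))
      = 1 + t * N1 il il := by
    rw [hN1u, single_dotProduct, one_mul]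
  set c2 : ℝ := 1 + t * N1 il il with hc2def
  have hc1c2 : c1 * c2 = (1 + t * α) * (1 + t * α') - t ^ 2 * β ^ 2 := by
    rw [hc2def, hN1_ll, hc1def]
    field_simp
    ring
  have hprodpos : 0 < c1 * c2 := by
    rw [hc1c2]
    nlinarith [hCS, ht, hα, hα', mul_pos (mul_pos ht ht) (sub_pos.2 hCS)]
  have hc2pos : 0 < c2 := by
    by_contra hcon
    push_neg at hcon
    have := mul_nonpos_of_nonneg_of_nonpos hc1pos.le hcon
    linarith
  have hAdec : A = (D + vecMulVec (t • (Pi.single i0 1 : Fin n → ℝ)) (Pi.single i0 1))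
      + vecMulVec (t • (Pi.single il 1 : Fin n → ℝ)) (Pi.single il 1) := by
    rw [A_entrywise k₂ A hA, smul_vecMulVec, smul_vecMulVec, htdef, hDdef,
      PQ_eq k₂ i0 il hi0 hil]
    module
  set X : Matrix (Fin n) (Fin n) ℝ :=
    N1 - c2⁻¹ • vecMulVec (N1 *ᵥ (t • (Pi.single il 1 : Fin n → ℝ)))
      ((Pi.single il 1 : Fin n → ℝ) ᵥ* N1) with hXdef
  have hAX : A * X = 1 := by
    rw [hAdec, hXdef]
    exact sherman _ N1 hD1N1 _ _ c2 (hc2def.trans hc2eq.symm) hc2pos.ne'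
  have hAinv : A⁻¹ = X := Matrix.inv_eq_right_inv hAX
  have hXapp : ∀ a b : Fin n, X a b = N1 a b - c2⁻¹ * (t * N1 a il * N1 il b) := by
    intro a b
    rw [hXdef]
    simp only [Matrix.sub_apply, Matrix.smul_apply, smul_eq_mul]
    rw [hN1u, hvN1]
    simp only [vecMulVec_apply]
    try ring
  constructor
  · rw [hAinv, hXapp i0 i0, hN1_00, hN1_0l, hN1_l0]
    have hnum : 0 < α * (c1 * c2) - t * β ^ 2 := by
      rw [hc1c2]
      nlinarith [hCS, ht, hα, hα', hβ, mul_pos ht hα,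
        mul_pos (mul_pos ht ht) (mul_pos hα (sub_pos.2 hCS))]
    have heq : α / c1 - c2⁻¹ * (t * (β / c1) * (β / c1))
        = (α * (c1 * c2) - t * β ^ 2) / (c1 ^ 2 * c2) := by
      field_simp
    rw [heq]
    exact div_pos hnum (by positivity)
  · rw [hAinv, hXapp i0 il, hN1_0l]
    have h1 : t * N1 il il = c2 - 1 := by rw [hc2def]; ring
    have heq : β / c1 - c2⁻¹ * (t * (β / c1) * N1 il il)
        = (β / c1) * (1 - c2⁻¹ * (c2 - 1)) := by
      rw [← h1]
      ring
    rw [heq, show (1 : ℝ) - c2⁻¹ * (c2 - 1) = c2⁻¹ by field_simp; ring]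
    exact mul_pos (div_pos hβ hc1pos) (inv_pos.2 hc2pos)


end Stmt8Aux

/-- For the symmetric pentadiagonal Toeplitz matrix of size `N = 2M+1` with
diagonal `2(1+k₂)`, first off-diagonals `-1`, second off-diagonals `-k₂`,
with `k₂ ∈ (-1/4, 0)`, the corner entries of the inverse satisfy
`(A⁻¹)₁,₁ > 0` and `(A⁻¹)₁,N > 0`. -/
theorem stmt_8 (M : ℕ) (hM : 1 ≤ M) (k₂ : ℝ) (hk₂l : -1/4 < k₂) (hk₂u : k₂ < 0)
    (A : Matrix (Fin (2 * M + 1)) (Fin (2 * M + 1)) ℝ)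
    (hA : ∀ i j : Fin (2 * M + 1), A i j =
      if (i : ℤ) = (j : ℤ) then 2 * (1 + k₂)
      else if |(i : ℤ) - (j : ℤ)| = 1 then -1
      else if |(i : ℤ) - (j : ℤ)| = 2 then -k₂
      else 0) :
    0 < A⁻¹ 0 0 ∧ 0 < A⁻¹ 0 (Fin.last (2 * M)) := by
  exact Stmt8Aux.key (by omega) k₂ hk₂l hk₂u A hA 0 (Fin.last (2 * M))
    (by simp) (by simp [Fin.last])
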